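/- Define maps h_n : 2^{≤n} → 2^{<ω} recursively by h₀(⟨⟩) = ⟨⟩; given h_n, set k_n := max{length(h_n(η)) + 1 : η ∈ 2^{≤n}} and h_{n+1}(⟨⟩) = ⟨⟩, h_{n+1}(⟨1⟩⌢ν) = ⟨1⟩⌢h_n(ν), h_{n+1}(⟨0⟩⌢ν) = 0^{k_n} ⌢ h_n(ν) (where 0^{k_n} is a block of k_n zeroes). Then each h_n is injective, preserves the initial-segment relation and its negation (ρ ⊴ ν iff h_n(ρ) ⊴ h_n(ν)), preserves meets up to the relation 'σ ⊴ the meet', and satisfies: (ν⌢⟨0⟩ ⊴ η iff h_n(ν)⌢⟨0⟩ ⊴ h_n(η)) for all ν, η in the domain. -/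

import Mathlib

/-- All binary sequences of length at most `n`, as a list. -/
def binLists : ℕ → List (List (Fin 2))
  | 0 => [[]]
  | n + 1 =>
      binLists n ++ (binLists n).map (List.cons (0 : Fin 2)) ++
        (binLists n).map (List.cons (1 : Fin 2))

/-- The recursively defined maps `h_n : 2^{≤n} → 2^{<ω}`: `h₀(⟨⟩) = ⟨⟩`,
`h_{n+1}(⟨⟩) = ⟨⟩`, `h_{n+1}(⟨1⟩⌢ν) = ⟨1⟩⌢h_n(ν)`, and
`h_{n+1}(⟨0⟩⌢ν) = 0^{k_n} ⌢ h_n(ν)` where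
`k_n = max{length (h_n η) + 1 : η ∈ 2^{≤n}}`. -/
def H : ℕ → List (Fin 2) → List (Fin 2) :=
  Nat.rec (motive := fun _ => List (Fin 2) → List (Fin 2)) (fun _ => [])
    (fun n h η =>
      match η with
      | [] => []
      | a :: ν =>
          if a = (1 : Fin 2) then (1 : Fin 2) :: h ν
          else
            List.replicate (((binLists n).map fun ρ => (h ρ).length + 1).foldr max 0)
              (0 : Fin 2) ++ h ν)

/-- The meet (longest common initial segment) of two binary sequences. -/
def meet : List (Fin 2) → List (Fin 2) → List (Fin 2)
  | a :: s, b :: t => if a = b then a :: meet s t else []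
  | _, _ => []

/-- The length bound used at stage `n`. -/
def K (n : ℕ) : ℕ := ((binLists n).map fun ρ => (H n ρ).length + 1).foldr max 0

@[simp] lemma H_zero (η : List (Fin 2)) : H 0 η = [] := rfl

@[simp] lemma H_succ_nil (n : ℕ) : H (n + 1) [] = [] := rfl

@[simp] lemma H_succ_one (n : ℕ) (ν : List (Fin 2)) :
    H (n + 1) ((1 : Fin 2) :: ν) = (1 : Fin 2) :: H n ν := rfl

@[simp] lemma H_succ_zero (n : ℕ) (ν : List (Fin 2)) :
    H (n + 1) ((0 : Fin 2) :: ν) = List.replicate (K n) (0 : Fin 2) ++ H n ν := rfl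

lemma fin2 : ∀ a : Fin 2, a = 0 ∨ a = 1 := by decide

lemma le_foldr_max {x : ℕ} : ∀ {L : List ℕ}, x ∈ L → x ≤ L.foldr max 0 := by
  intro L h
  induction L with
  | nil => simp at h
  | cons a L ih =>
    rcases List.mem_cons.1 h with rfl | h'
    · exact le_max_left _ _
    · exact le_trans (ih h') (le_max_right _ _)

lemma nil_mem_binLists (n : ℕ) : ([] : List (Fin 2)) ∈ binLists n := by
  induction n with
  | zero => simp [binLists]
  | succ n ih => simp [binLists]; tauto

lemma one_le_K (n : ℕ) : 1 ≤ K n := by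
  have h1 : (H n []).length + 1 ∈ (binLists n).map (fun ρ => (H n ρ).length + 1) :=
    List.mem_map_of_mem (nil_mem_binLists n)
  exact le_trans (Nat.le_add_left 1 _) (le_foldr_max h1)

lemma K_eq (n : ℕ) : ∃ m, K n = m + 1 :=
  ⟨K n - 1, by have := one_le_K n; omega⟩

lemma prefix_meet : ∀ (u s t : List (Fin 2)), u <+: meet s t ↔ u <+: s ∧ u <+: t := by
  intro u
  induction u with
  | nil => simp
  | cons c u' ih =>
    intro s t
    rcases s with _ | ⟨a, s'⟩
    · simp [meet]
    rcases t with _ | ⟨b, t'⟩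
    · simp [meet]
    by_cases hab : a = b
    · subst hab
      simp only [meet, if_pos rfl, if_true, List.cons_prefix_cons, ih]
      tauto
    · simp only [meet, if_neg hab, List.cons_prefix_cons]
      constructor
      · intro h
        exact absurd (List.prefix_nil.1 h) (List.cons_ne_nil _ _)
      · rintro ⟨⟨rfl, -⟩, ⟨rfl, -⟩⟩
        exact absurd rfl hab

lemma H_pres (n : ℕ) : ∀ ρ ν : List (Fin 2), ρ.length ≤ n → ν.length ≤ n →
    ((ρ <+: ν ↔ H n ρ <+: H n ν) ∧
      (ν ++ [(0 : Fin 2)] <+: ρ ↔ H n ν ++ [(0 : Fin 2)] <+: H n ρ)) := by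
  induction n with
  | zero =>
    intro ρ ν hρ hν
    have hρ' : ρ = [] := List.length_eq_zero_iff.1 (Nat.le_zero.1 hρ)
    have hν' : ν = [] := List.length_eq_zero_iff.1 (Nat.le_zero.1 hν)
    subst hρ'; subst hν'
    exact ⟨Iff.rfl, Iff.rfl⟩
  | succ n ih =>
    intro ρ ν hρ hν
    obtain ⟨m, hm⟩ := K_eq n
    rcases ρ with _ | ⟨a, ρ'⟩
    · rcases ν with _ | ⟨b, ν'⟩
      · exact ⟨Iff.rfl, Iff.rfl⟩
      · constructor
        · simp
        · rcases fin2 b with rfl | rfl <;>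
            simp [List.prefix_nil, hm, List.replicate_succ]
    · have hρ' : ρ'.length ≤ n := by simpa using Nat.succ_le_succ_iff.1 hρ
      rcases ν with _ | ⟨b, ν'⟩
      · constructor
        · rcases fin2 a with rfl | rfl <;>
            simp [List.prefix_nil, hm, List.replicate_succ]
        · rcases fin2 a with rfl | rfl <;>
            simp [hm, List.replicate_succ, List.cons_prefix_cons, List.nil_prefix]
      · have hν' : ν'.length ≤ n := by simpa using Nat.succ_le_succ_iff.1 hν
        obtain ⟨ihA, ihB⟩ := ih ρ' ν' hρ' hν'
        obtain ⟨ihA', ihB'⟩ := ih ν' ρ' hν' hρ'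
        constructor
        · -- prefix iff
          rcases fin2 a with rfl | rfl <;> rcases fin2 b with rfl | rfl
          · simp [List.prefix_append_right_inj, List.cons_prefix_cons, ihA]
          · simp [hm, List.replicate_succ, List.cons_prefix_cons]
          · simp [hm, List.replicate_succ, List.cons_prefix_cons]
          · simp [List.cons_prefix_cons, ihA]
        · -- ν ++ [0] prefix iff
          rcases fin2 a with rfl | rfl <;> rcases fin2 b with rfl | rfl
          · simp [List.append_assoc, List.prefix_append_right_inj,
              List.cons_prefix_cons, ihB]
          · simp [hm, List.replicate_succ, List.cons_prefix_cons]
          · simp [hm, List.replicate_succ, List.cons_prefix_cons]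
          · simp [List.cons_prefix_cons, ihB]

/-- Each `h_n` is injective on `2^{≤n}`, preserves the initial-segment relation and its
negation, preserves meets up to the relation `σ ⊴ (meet of the pair)`, and satisfies
`ν⌢⟨0⟩ ⊴ η` iff `h_n(ν)⌢⟨0⟩ ⊴ h_n(η)`. -/
theorem H_properties (n : ℕ) (ρ ν σ : List (Fin 2))
    (hρ : ρ.length ≤ n) (hν : ν.length ≤ n) (hσ : σ.length ≤ n) :
    (H n ρ = H n ν → ρ = ν) ∧
    (ρ <+: ν ↔ H n ρ <+: H n ν) ∧
    (σ <+: meet ρ ν ↔ H n σ <+: meet (H n ρ) (H n ν)) ∧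
    (ν ++ [(0 : Fin 2)] <+: ρ ↔ H n ν ++ [(0 : Fin 2)] <+: H n ρ) := by
  have hA := (H_pres n ρ ν hρ hν).1
  have hA' := (H_pres n ν ρ hν hρ).1
  refine ⟨?_, hA, ?_, (H_pres n ρ ν hρ hν).2⟩
  · intro h
    have p1 : ρ <+: ν := hA.2 (by rw [h])
    have p2 : ν <+: ρ := hA'.2 (by rw [h])
    exact p1.sublist.antisymm p2.sublist
  · rw [prefix_meet, prefix_meet]
    exact and_congr (H_pres n σ ρ hσ hρ).1 (H_pres n σ ν hσ hν).1
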